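/- If f : Δ_k → ℝ is continuous, then the sequence of multivariate Bernstein approximants 𝔹_n(f | x) = ∑_{v ∈ ℕ^k, |v| ≤ n} f(v/n) · B_{v,n}(x) converges to f uniformly on Δ_k as n → ∞. -/

import Mathlib

open Finset

/-- Index set. -/
def bT (k n : ℕ) : Finset (Fin k → ℕ) :=
  (Fintype.piFinset fun _ : Fin k => Finset.range (n + 1)).filter (fun v => ∑ i, v i ≤ n)

lemma mem_bT {k n : ℕ} {v : Fin k → ℕ} : v ∈ bT k n ↔ ∑ i, v i ≤ n := by
  simp only [bT, Finset.mem_filter, Fintype.mem_piFinset, Finset.mem_range]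
  constructor
  · exact fun h => h.2
  · intro h
    refine ⟨fun i => Nat.lt_succ_of_le (le_trans ?_ h), h⟩
    exact Finset.single_le_sum (f := fun j => v j) (fun _ _ => Nat.zero_le _) (Finset.mem_univ i)

noncomputable def bC (n : ℕ) {k : ℕ} (v : Fin k → ℕ) : ℝ :=
  (n.factorial : ℝ) / ((∏ i, ((v i).factorial : ℝ)) * ((n - ∑ i, v i).factorial : ℝ))

lemma gen (k : ℕ) : ∀ (n : ℕ) (y : Fin k → ℝ) (z : ℝ),
    ∑ v ∈ bT k n, bC n v * (∏ i, y i ^ v i) * z ^ (n - ∑ i, v i)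
      = (∑ i, y i + z) ^ n := by
  induction k with
  | zero =>
    intro n y z
    have h0 : bT 0 n = {(fun i => 0 : Fin 0 → ℕ)} := by
      apply Finset.eq_singleton_iff_unique_mem.mpr
      constructor
      · simp [mem_bT]
      · intro v _; funext i; exact absurd i.2 (by omega)
    rw [h0]
    simp only [bC, Finset.sum_singleton, Finset.univ_eq_empty, Finset.prod_empty,
      Finset.sum_empty, Nat.sub_zero, one_mul, add_comm]
    rw [div_self (Nat.cast_ne_zero.mpr n.factorial_ne_zero), one_mul]
    norm_num
  | succ k ih =>
    intro n y z
    have key : ∑ v ∈ bT (k+1) n, bC n v * (∏ i, y i ^ v i) * z ^ (n - ∑ i, v i)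
        = ∑ p ∈ (Finset.range (n+1)).sigma (fun m => bT k (n - m)),
            bC n (Fin.cons p.1 p.2) * (∏ i, y i ^ (Fin.cons p.1 p.2 : Fin (k+1) → ℕ) i)
              * z ^ (n - ∑ i, (Fin.cons p.1 p.2 : Fin (k+1) → ℕ) i) := by
      refine Finset.sum_nbij' (fun v => ⟨v 0, Fin.tail v⟩) (fun p => Fin.cons p.1 p.2)
        ?_ ?_ ?_ ?_ ?_
      · intro v hv
        rw [mem_bT] at hv
        rw [Fin.sum_univ_succ] at hv
        simp only [Finset.mem_sigma, Finset.mem_range, mem_bT]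
        exact ⟨by omega, by simp [Fin.tail]; omega⟩
      · intro p hp
        simp only [Finset.mem_sigma, Finset.mem_range, mem_bT] at hp ⊢
        rw [Fin.sum_univ_succ]
        simp only [Fin.cons_zero, Fin.cons_succ]
        omega
      · intro v _; exact (Fin.cons_self_tail v)
      · intro p _; simp [Fin.tail]
      · intro v _
        rw [Fin.cons_self_tail v]
    rw [key, Finset.sum_sigma]
    have inner : ∀ m ∈ Finset.range (n+1),
        ∑ w ∈ bT k (n - m),
            bC n (Fin.cons m w) * (∏ i, y i ^ (Fin.cons m w : Fin (k+1) → ℕ) i)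
              * z ^ (n - ∑ i, (Fin.cons m w : Fin (k+1) → ℕ) i)
        = (n.choose m : ℝ) * y 0 ^ m * (∑ i : Fin k, y i.succ + z) ^ (n - m) := by
      intro m hm
      rw [Finset.mem_range] at hm
      have hmn : m ≤ n := by omega
      rw [← ih (n - m) (fun i => y i.succ) z, Finset.mul_sum]
      apply Finset.sum_congr rfl
      intro w hw
      rw [mem_bT] at hw
      have hsum : ∑ i, (Fin.cons m w : Fin (k+1) → ℕ) i = m + ∑ i, w i := by
        rw [Fin.sum_univ_succ]; simp
      have hprodfact : (∏ i, (((Fin.cons m w : Fin (k+1) → ℕ) i).factorial : ℝ))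
          = (m.factorial : ℝ) * ∏ i, ((w i).factorial : ℝ) := by
        rw [Fin.prod_univ_succ]; simp
      have hprody : (∏ i, y i ^ (Fin.cons m w : Fin (k+1) → ℕ) i)
          = y 0 ^ m * ∏ i, y i.succ ^ w i := by
        rw [Fin.prod_univ_succ]; simp
      have hxp : n - (m + ∑ i, w i) = (n - m) - ∑ i, w i := by omega
      have hC : bC n (Fin.cons m w) = (n.choose m : ℝ) * bC (n - m) w := by
        unfold bC
        rw [hprodfact, hsum, hxp]
        have hfac : (n.factorial : ℝ) = (n.choose m : ℝ) * m.factorial * (n - m).factorial := by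
          rw [← Nat.choose_mul_factorial_mul_factorial hmn]; push_cast; ring
        rw [hfac]
        have h1 : (m.factorial : ℝ) ≠ 0 := Nat.cast_ne_zero.mpr (Nat.factorial_ne_zero m)
        field_simp
      rw [hC, hsum, hxp, hprody]
      ring
    rw [Finset.sum_congr rfl inner]
    rw [Fin.sum_univ_succ]
    rw [add_assoc, add_pow]
    apply Finset.sum_congr rfl
    intro m _
    ring

lemma descMoment (k n c : ℕ) (hc : c ≤ n) (i : Fin k) (y : Fin k → ℝ) (z : ℝ) :
    ∑ v ∈ bT k n, ((v i).descFactorial c : ℝ) * bC n v * (∏ j, y j ^ v j) * z ^ (n - ∑ j, v j)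
      = (n.descFactorial c : ℝ) * y i ^ c * (∑ j, y j + z) ^ (n - c) := by
  rw [← gen k (n - c) y z, Finset.mul_sum]
  rw [← Finset.sum_filter_of_ne (p := fun v => c ≤ v i)
    (by intro v _ hne
        by_contra hlt
        push_neg at hlt
        rw [Nat.descFactorial_eq_zero_iff_lt.mpr hlt] at hne
        simp at hne)]
  refine (Finset.sum_nbij' (fun w => Function.update w i (w i + c))
    (fun v => Function.update v i (v i - c)) ?_ ?_ ?_ ?_ ?_).symm
  · -- maps bT k (n-c) into filter
    intro w hw
    rw [mem_bT] at hw
    have hsum : ∑ j, Function.update w i (w i + c) j = (∑ j, w j) + c := by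
      rw [Finset.sum_update_of_mem (Finset.mem_univ i)]
      rw [← Finset.add_sum_erase _ w (Finset.mem_univ i), Finset.sdiff_singleton_eq_erase]
      ring
    rw [Finset.mem_filter, mem_bT, hsum]
    refine ⟨by omega, ?_⟩
    simp
  · intro v hv
    rw [Finset.mem_filter, mem_bT] at hv
    rw [mem_bT]
    have hsum : ∑ j, Function.update v i (v i - c) j = (∑ j, v j) - c := by
      rw [Finset.sum_update_of_mem (Finset.mem_univ i)]
      have : ∑ j, v j = v i + ∑ j ∈ Finset.univ.erase i, v j :=
        (Finset.add_sum_erase _ v (Finset.mem_univ i)).symm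
      rw [Finset.sdiff_singleton_eq_erase]
      omega
    rw [hsum]
    omega
  · intro w _
    simp [Function.update_idem]
  · intro v hv
    rw [Finset.mem_filter] at hv
    have : v i - c + c = v i := Nat.sub_add_cancel hv.2
    simp [Function.update_idem, this]
  · -- summand equality
    intro w hw
    rw [mem_bT] at hw
    beta_reduce
    set v := Function.update w i (w i + c) with hv
    have hvi : v i = w i + c := by simp [hv]
    have hsum : ∑ j, v j = (∑ j, w j) + c := by
      rw [hv, Finset.sum_update_of_mem (Finset.mem_univ i)]
      rw [← Finset.add_sum_erase _ w (Finset.mem_univ i), Finset.sdiff_singleton_eq_erase]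
      ring
    have hexp : n - ∑ j, v j = (n - c) - ∑ j, w j := by omega
    have hprodf : (∏ j, ((v j).factorial : ℝ))
        = ((w i + c).factorial : ℝ) * ∏ j ∈ Finset.univ.erase i, ((w j).factorial : ℝ) := by
      rw [hv, ← Finset.mul_prod_erase _ _ (Finset.mem_univ i)]
      rw [Function.update_self]
      congr 1
      apply Finset.prod_congr rfl
      intro j hj
      rw [Function.update_of_ne (Finset.ne_of_mem_erase hj)]
    have hprodf' : (∏ j, ((w j).factorial : ℝ))
        = ((w i).factorial : ℝ) * ∏ j ∈ Finset.univ.erase i, ((w j).factorial : ℝ) :=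
      (Finset.mul_prod_erase _ _ (Finset.mem_univ i)).symm
    have hprody : (∏ j, y j ^ v j) = y i ^ c * ∏ j, y j ^ w j := by
      rw [hv, ← Finset.mul_prod_erase _ _ (Finset.mem_univ i),
        ← Finset.mul_prod_erase _ (fun j => y j ^ w j) (Finset.mem_univ i)]
      rw [Function.update_self, pow_add]
      rw [show (∏ j ∈ Finset.univ.erase i, y j ^ Function.update w i (w i + c) j)
          = ∏ j ∈ Finset.univ.erase i, y j ^ w j from
        Finset.prod_congr rfl fun j hj => by
          rw [Function.update_of_ne (Finset.ne_of_mem_erase hj)]]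
      ring
    have hd1 : ((w i + c).descFactorial c : ℝ) * ((w i).factorial : ℝ)
        = ((w i + c).factorial : ℝ) := by
      have := Nat.factorial_mul_descFactorial (Nat.le_add_left c (w i))
      rw [Nat.add_sub_cancel] at this
      exact_mod_cast by rw [mul_comm]; exact_mod_cast congrArg (Nat.cast (R := ℝ)) this
    have hd2 : ((n.descFactorial c : ℝ)) * (((n - c).factorial : ℝ)) = (n.factorial : ℝ) := by
      have := Nat.factorial_mul_descFactorial hc
      exact_mod_cast by rw [mul_comm]; exact_mod_cast congrArg (Nat.cast (R := ℝ)) this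
    -- now the algebra
    unfold bC
    rw [hvi, hsum, hprodf, hprody, hprodf']
    rw [show n - ((∑ j, w j) + c) = (n - c) - ∑ j, w j from by omega]
    have e1 : (((w i + c).factorial : ℝ)) ≠ 0 := Nat.cast_ne_zero.mpr (Nat.factorial_ne_zero _)
    have e2 : ((w i).factorial : ℝ) ≠ 0 := Nat.cast_ne_zero.mpr (Nat.factorial_ne_zero _)
    have e3 : (∏ j ∈ Finset.univ.erase i, ((w j).factorial : ℝ)) ≠ 0 :=
      Finset.prod_ne_zero_iff.mpr fun j _ => Nat.cast_ne_zero.mpr (Nat.factorial_ne_zero _)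
    have e4 : (((n - c - ∑ j, w j).factorial : ℝ)) ≠ 0 :=
      Nat.cast_ne_zero.mpr (Nat.factorial_ne_zero _)
    have e5 : (((n - c).factorial : ℝ)) ≠ 0 := Nat.cast_ne_zero.mpr (Nat.factorial_ne_zero _)
    have e6 : (((w i + c).descFactorial c : ℕ) : ℝ) ≠ 0 := fun h => e1 (by rw [← hd1, h, zero_mul])
    rw [← hd1, ← hd2]
    field_simp

/-- The `k`-dimensional simplex `Δ_k ⊆ [0,1]^k`. -/
def stdSimplex' (k : ℕ) : Set (Fin k → ℝ) :=
  {x | (∀ i, x i ∈ Set.Icc (0 : ℝ) 1) ∧ ∑ i, x i ≤ 1}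

/-- The multivariate Bernstein polynomial `B_{v,n}(x)` on the `k`-simplex. -/
noncomputable def bern (k n : ℕ) (v : Fin k → ℕ) (x : Fin k → ℝ) : ℝ :=
  ((n.factorial : ℝ) / ((∏ i, ((v i).factorial : ℝ)) * ((n - ∑ i, v i).factorial : ℝ))) *
    (∏ i, x i ^ v i) * (1 - ∑ i, x i) ^ (n - ∑ i, v i)

lemma bern_eq (k n : ℕ) (v : Fin k → ℕ) (x : Fin k → ℝ) :
    bern k n v x = bC n v * (∏ i, x i ^ v i) * (1 - ∑ i, x i) ^ (n - ∑ i, v i) := rfl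

lemma momC (k n c : ℕ) (hc : c ≤ n) (i : Fin k) (x : Fin k → ℝ) :
    ∑ v ∈ bT k n, ((v i).descFactorial c : ℝ) * bern k n v x
      = (n.descFactorial c : ℝ) * x i ^ c := by
  have h := descMoment k n c hc i x (1 - ∑ j, x j)
  rw [show (∑ j, x j + (1 - ∑ j, x j)) = 1 by ring, one_pow, mul_one] at h
  rw [← h]
  apply Finset.sum_congr rfl
  intro v _
  rw [bern_eq]
  ring

lemma sum_bern (k n : ℕ) (x : Fin k → ℝ) :
    ∑ v ∈ bT k n, bern k n v x = 1 := by
  have h := gen k n x (1 - ∑ j, x j)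
  rw [show (∑ j, x j + (1 - ∑ j, x j)) = 1 by ring, one_pow] at h
  rw [← h]
  apply Finset.sum_congr rfl
  intro v _
  rw [bern_eq]

lemma cast_desc_one (m : ℕ) : (m.descFactorial 1 : ℝ) = (m : ℝ) := by
  rw [Nat.descFactorial_one]

lemma cast_desc_two (m : ℕ) : (m.descFactorial 2 : ℝ) = (m : ℝ) ^ 2 - m := by
  rcases m with _ | m
  · simp
  · show (((m + 1 - 1) * ((m + 1 - 0) * 1) : ℕ) : ℝ) = _
    push_cast
    ring

lemma bern_var (k n : ℕ) (hn : 2 ≤ n) (i : Fin k) (x : Fin k → ℝ) :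
    ∑ v ∈ bT k n, ((v i : ℝ) / n - x i) ^ 2 * bern k n v x
      = x i * (1 - x i) / n := by
  have hn' : (n : ℝ) ≠ 0 := by positivity
  have h0 := momC k n 0 (by omega) i x
  have h1 := momC k n 1 (by omega) i x
  have h2 := momC k n 2 hn i x
  simp only [Nat.descFactorial_zero, pow_zero, Nat.cast_one, one_mul, mul_one] at h0
  simp only [cast_desc_one] at h1
  simp only [cast_desc_two] at h2
  have expand : ∀ v ∈ bT k n, ((v i : ℝ) / n - x i) ^ 2 * bern k n v x
      = (1 / (n : ℝ) ^ 2) * (((v i : ℝ) ^ 2 - (v i : ℝ)) * bern k n v x)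
        + ((1 / (n : ℝ) ^ 2) - 2 * x i / n) * ((v i : ℝ) * bern k n v x)
        + (x i ^ 2) * bern k n v x := by
    intro v _
    field_simp
    ring
  rw [Finset.sum_congr rfl expand]
  rw [Finset.sum_add_distrib, Finset.sum_add_distrib, ← Finset.mul_sum, ← Finset.mul_sum,
    ← Finset.mul_sum]
  rw [h2, h1]
  have h0' : ∑ v ∈ bT k n, bern k n v x = 1 := h0
  rw [h0']
  field_simp
  ring

theorem bern_tendstoUniformlyOn (k : ℕ) (hk : 1 ≤ k) (f : (Fin k → ℝ) → ℝ)
    (hf : ContinuousOn f (stdSimplex' k)) :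
    TendstoUniformlyOn
      (fun n x =>
        ∑ v ∈ (Fintype.piFinset fun _ : Fin k => Finset.range (n + 1)).filter
            (fun v => ∑ i, v i ≤ n),
          f (fun i => (v i : ℝ) / n) * bern k n v x)
      f Filter.atTop (stdSimplex' k) := by
  have hclosed : IsClosed (stdSimplex' k) := by
    have he : stdSimplex' k =
        (⋂ i, {x : Fin k → ℝ | x i ∈ Set.Icc (0:ℝ) 1}) ∩ {x | ∑ i, x i ≤ 1} := by
      ext x
      simp [stdSimplex', Set.mem_iInter]
    rw [he]
    exact (isClosed_iInter fun i => (isClosed_Icc).preimage (continuous_apply i)).inter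
      (isClosed_le (continuous_finset_sum _ fun i _ => continuous_apply i) continuous_const)
  have hcompact : IsCompact (stdSimplex' k) := by
    refine (isCompact_Icc (a := (0 : Fin k → ℝ)) (b := 1)).of_isClosed_subset hclosed ?_
    intro x hx
    rw [Set.mem_Icc]
    exact ⟨fun i => (hx.1 i).1, fun i => (hx.1 i).2⟩
  obtain ⟨C, hC⟩ := hcompact.exists_bound_of_continuousOn hf
  set M := max C 0 with hM
  have hM0 : 0 ≤ M := le_max_right _ _
  have hfM : ∀ x ∈ stdSimplex' k, |f x| ≤ M := fun x hx =>
    le_trans (by simpa using hC x hx) (le_max_left _ _)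
  have hUC := Metric.uniformContinuousOn_iff.mp
    (hcompact.uniformContinuousOn_of_continuous hf)
  rw [Metric.tendstoUniformlyOn_iff]
  intro ε hε
  obtain ⟨δ, hδ0, hδ⟩ := hUC (ε/2) (by positivity)
  set Cst := 2 * M * k / (4 * δ^2) with hCstdef
  have hCst : 0 ≤ Cst := by positivity
  rw [Filter.eventually_atTop]
  refine ⟨max 2 (⌈2 * Cst / ε⌉₊ + 1), fun n hn x hx => ?_⟩
  have hn2 : 2 ≤ n := le_trans (le_max_left _ _) hn
  have hn0 : (0:ℝ) < n := by exact_mod_cast Nat.lt_of_lt_of_le (by norm_num) hn2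
  have hnC : 2 * Cst / ε < n := by
    have h1 : (⌈2 * Cst / ε⌉₊ + 1 : ℕ) ≤ n := le_trans (le_max_right _ _) hn
    have h2 : 2 * Cst / ε ≤ (⌈2 * Cst / ε⌉₊ : ℝ) := Nat.le_ceil _
    have h3 : ((⌈2 * Cst / ε⌉₊ : ℕ) : ℝ) < n := by exact_mod_cast Nat.lt_of_succ_le h1
    linarith
  have hx0 : ∀ i, 0 ≤ x i := fun i => (hx.1 i).1
  have hx1 : ∀ i, x i ≤ 1 := fun i => (hx.1 i).2
  have hxs : ∑ i, x i ≤ 1 := hx.2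
  have hbpos : ∀ v : Fin k → ℕ, 0 ≤ bern k n v x := by
    intro v
    rw [bern_eq]
    have h1 : (0:ℝ) ≤ 1 - ∑ i, x i := by linarith
    unfold bC
    apply mul_nonneg (mul_nonneg (div_nonneg (by positivity) ?_)
      (Finset.prod_nonneg fun i _ => pow_nonneg (hx0 i) _)) (pow_nonneg h1 _)
    positivity
  have hmem : ∀ v ∈ bT k n, (fun i => (v i : ℝ)/n) ∈ stdSimplex' k := by
    intro v hv
    rw [mem_bT] at hv
    refine ⟨fun i => ⟨by positivity, ?_⟩, ?_⟩
    · rw [div_le_one hn0]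
      have h1 : v i ≤ n := le_trans (Finset.single_le_sum (f := fun j => v j)
        (fun _ _ => Nat.zero_le _) (Finset.mem_univ i)) hv
      exact_mod_cast h1
    · rw [← Finset.sum_div, div_le_one hn0]
      exact_mod_cast hv
  show dist (f x) (∑ v ∈ bT k n, f (fun i => (v i : ℝ)/n) * bern k n v x) < ε
  have key : f x - ∑ v ∈ bT k n, f (fun i => (v i : ℝ)/n) * bern k n v x
      = ∑ v ∈ bT k n, (f x - f (fun i => (v i : ℝ)/n)) * bern k n v x := by
    rw [Finset.sum_congr rfl (fun v _ => sub_mul (f x) _ (bern k n v x)),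
      Finset.sum_sub_distrib, ← Finset.mul_sum, sum_bern, mul_one]
  rw [Real.dist_eq, key]
  have habs : |∑ v ∈ bT k n, (f x - f (fun i => (v i : ℝ)/n)) * bern k n v x|
      ≤ ∑ v ∈ bT k n, |f x - f (fun i => (v i : ℝ)/n)| * bern k n v x := by
    refine le_trans (Finset.abs_sum_le_sum_abs _ _) (le_of_eq ?_)
    exact Finset.sum_congr rfl fun v _ => by rw [abs_mul, abs_of_nonneg (hbpos v)]
  set p : (Fin k → ℕ) → Prop := fun v => dist (fun i => (v i : ℝ)/n) x < δ with hp
  have hsplit : ∑ v ∈ bT k n, |f x - f (fun i => (v i : ℝ)/n)| * bern k n v x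
      = (∑ v ∈ (bT k n).filter p, |f x - f (fun i => (v i : ℝ)/n)| * bern k n v x)
        + ∑ v ∈ (bT k n).filter (fun v => ¬ p v),
            |f x - f (fun i => (v i : ℝ)/n)| * bern k n v x :=
    (Finset.sum_filter_add_sum_filter_not _ _ _).symm
  have hnear : ∑ v ∈ (bT k n).filter p, |f x - f (fun i => (v i : ℝ)/n)| * bern k n v x
      ≤ ε / 2 := by
    calc ∑ v ∈ (bT k n).filter p, |f x - f (fun i => (v i : ℝ)/n)| * bern k n v x
        ≤ ∑ v ∈ (bT k n).filter p, (ε/2) * bern k n v x := by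
          refine Finset.sum_le_sum fun v hv => ?_
          obtain ⟨hv1, hv2⟩ := Finset.mem_filter.mp hv
          have hd := hδ x hx _ (hmem v hv1) (by rw [dist_comm]; exact hv2)
          rw [Real.dist_eq] at hd
          exact mul_le_mul_of_nonneg_right hd.le (hbpos v)
      _ = (ε/2) * ∑ v ∈ (bT k n).filter p, bern k n v x := by rw [Finset.mul_sum]
      _ ≤ (ε/2) * 1 := by
          refine mul_le_mul_of_nonneg_left ?_ (by positivity)
          rw [← sum_bern k n x]
          exact Finset.sum_le_sum_of_subset_of_nonneg (Finset.filter_subset _ _)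
            fun v _ _ => hbpos v
      _ = ε/2 := mul_one _
  have hfar : ∑ v ∈ (bT k n).filter (fun v => ¬ p v),
      |f x - f (fun i => (v i : ℝ)/n)| * bern k n v x ≤ Cst / n := by
    have far_pt : ∀ v ∈ (bT k n).filter (fun v => ¬ p v),
        δ^2 ≤ ∑ i, ((v i : ℝ)/n - x i)^2 := by
      intro v hv
      obtain ⟨hv1, hv2⟩ := Finset.mem_filter.mp hv
      rw [hp] at hv2
      push_neg at hv2
      by_contra hcon
      push_neg at hcon
      have hall : ∀ i, dist ((v i : ℝ)/n) (x i) < δ := by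
        intro i
        have hsq : ((v i : ℝ)/n - x i)^2 < δ^2 :=
          lt_of_le_of_lt (Finset.single_le_sum (f := fun j => ((v j : ℝ)/n - x j)^2)
            (fun j _ => sq_nonneg _) (Finset.mem_univ i)) hcon
        rw [Real.dist_eq]
        nlinarith [abs_nonneg ((v i : ℝ)/n - x i), sq_abs ((v i : ℝ)/n - x i)]
      exact absurd ((dist_pi_lt_iff hδ0).mpr hall) (not_lt.mpr hv2)
    calc ∑ v ∈ (bT k n).filter (fun v => ¬ p v),
          |f x - f (fun i => (v i : ℝ)/n)| * bern k n v x
        ≤ ∑ v ∈ (bT k n).filter (fun v => ¬ p v),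
            (2*M/δ^2) * ((∑ i, ((v i : ℝ)/n - x i)^2) * bern k n v x) := by
          refine Finset.sum_le_sum fun v hv => ?_
          obtain ⟨hv1, _⟩ := Finset.mem_filter.mp hv
          have hb1 : |f x - f (fun i => (v i : ℝ)/n)| ≤ 2*M :=
            le_trans (abs_sub _ _) (by
              have := hfM x hx
              have := hfM _ (hmem v hv1)
              linarith)
          have hb2 : (1:ℝ) ≤ (∑ i, ((v i : ℝ)/n - x i)^2) / δ^2 := by
            rw [le_div_iff₀ (by positivity), one_mul]
            exact far_pt v hv
          calc |f x - f (fun i => (v i : ℝ)/n)| * bern k n v x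
              ≤ (2*M) * bern k n v x := mul_le_mul_of_nonneg_right hb1 (hbpos v)
            _ ≤ (2*M) * (((∑ i, ((v i : ℝ)/n - x i)^2) / δ^2) * bern k n v x) := by
                refine mul_le_mul_of_nonneg_left ?_ (by positivity)
                nlinarith [hbpos v, hb2]
            _ = (2*M/δ^2) * ((∑ i, ((v i : ℝ)/n - x i)^2) * bern k n v x) := by ring
      _ ≤ ∑ v ∈ bT k n, (2*M/δ^2) * ((∑ i, ((v i : ℝ)/n - x i)^2) * bern k n v x) := by
          refine Finset.sum_le_sum_of_subset_of_nonneg (Finset.filter_subset _ _)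
            fun v _ _ => ?_
          have h1 : (0:ℝ) ≤ ∑ i, ((v i : ℝ)/n - x i)^2 :=
            Finset.sum_nonneg fun i _ => sq_nonneg _
          have := hbpos v
          positivity
      _ = (2*M/δ^2) * ∑ i, ∑ v ∈ bT k n, ((v i : ℝ)/n - x i)^2 * bern k n v x := by
          rw [← Finset.mul_sum]
          congr 1
          rw [Finset.sum_comm]
          exact Finset.sum_congr rfl fun v _ => by rw [Finset.sum_mul]
      _ ≤ (2*M/δ^2) * ∑ i : Fin k, (1/(4*(n:ℝ))) := by
          refine mul_le_mul_of_nonneg_left (Finset.sum_le_sum fun i _ => ?_) (by positivity)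
          rw [bern_var k n hn2 i x]
          rw [div_le_div_iff₀ hn0 (by positivity)]
          nlinarith [sq_nonneg (x i - 1/2)]
      _ ≤ Cst / n := by
          rw [Finset.sum_const, Finset.card_univ, Fintype.card_fin, nsmul_eq_mul, hCstdef]
          apply le_of_eq
          ring
  have hfarlt : Cst / n < ε / 2 := by
    rw [div_lt_iff₀ hn0]
    rw [div_lt_iff₀ hε] at hnC
    linarith
  calc |∑ v ∈ bT k n, (f x - f (fun i => (v i : ℝ)/n)) * bern k n v x|
      ≤ _ := habs
    _ = _ := hsplit
    _ < ε := by linarith
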